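/- With notation as above, W(g,h) ≥ 0 for all integers g, h with 0 ≤ g ≤ k₁ and 0 ≤ h ≤ k₂, for any nonnegative integers k₁, k₂ (where W(g,h) = Σ_{u=0}^{min(m,g)} Σ_{v=0}^{min(m,h)} p(u,v)). -/
import Mathlib


open Finset

theorem stmt4 (m : ℕ) (hm : 1 ≤ m) (p : ℕ → ℝ) (hp : ∀ u, 0 ≤ p u)
    (hsum : ∑ u ∈ Finset.range (m + 1), p u = 1)
    (W : ℕ → ℕ → ℝ)
    (hW : ∀ g h, W g h = ∑ u ∈ Finset.range (min m g + 1), ∑ v ∈ Finset.range (min m h + 1),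
        (if u + v = m then p u ^ 2 - p u else p u * p (m - v)))
    (k₁ k₂ : ℕ) (g h : ℕ) (hg : g ≤ k₁) (hh : h ≤ k₂) :
    0 ≤ W g h := by
  rw [hW]
  set a := min m g with ha'
  set b := min m h with hb'
  have ha : a ≤ m := min_le_left _ _
  have hb : b ≤ m := min_le_left _ _
  have step1 : ∀ u ∈ range (a+1),
      (∑ v ∈ range (b+1), (if u + v = m then p u ^ 2 - p u else p u * p (m - v)))
      = (∑ v ∈ range (b+1), p u * p (m - v))
        - (∑ v ∈ range (b+1), (if v = m - u then p u else 0)) := by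
    intro u hu
    rw [← Finset.sum_sub_distrib]
    apply Finset.sum_congr rfl
    intro v hv
    simp only [mem_range] at hu hv
    by_cases hc : u + v = m
    · have h1 : v = m - u := by omega
      have h2 : m - v = u := by omega
      rw [if_pos hc, if_pos h1, h2]
      ring
    · have h1 : ¬ v = m - u := by omega
      rw [if_neg hc, if_neg h1]
      ring
  rw [Finset.sum_congr rfl step1, Finset.sum_sub_distrib]
  have hAB : ∑ u ∈ range (a+1), ∑ v ∈ range (b+1), p u * p (m - v)
      = (∑ u ∈ range (a+1), p u) * (∑ v ∈ range (b+1), p (m - v)) := by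
    rw [Finset.sum_mul_sum]
  have hC : ∀ u ∈ range (a+1),
      (∑ v ∈ range (b+1), (if v = m - u then p u else 0))
      = (if m - u ∈ range (b+1) then p u else 0) := by
    intro u _
    exact Finset.sum_ite_eq' (range (b+1)) (m - u) (fun _ => p u)
  rw [Finset.sum_congr rfl hC, hAB]
  have hA0 : 0 ≤ ∑ u ∈ range (a+1), p u := Finset.sum_nonneg fun u _ => hp u
  have hB0 : 0 ≤ ∑ v ∈ range (b+1), p (m - v) := Finset.sum_nonneg fun v _ => hp _
  by_cases hcase : m ≤ a + b
  · -- correction term present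
    have hCf : ∑ u ∈ range (a+1), (if m - u ∈ range (b+1) then p u else 0)
        = ∑ u ∈ Finset.Ico (m - b) (a+1), p u := by
      rw [← Finset.sum_filter]
      congr 1
      ext u
      simp only [Finset.mem_filter, mem_range, Finset.mem_Ico]
      omega
    have hB : ∑ v ∈ range (b+1), p (m - v) = ∑ w ∈ Finset.Ico (m - b) (m + 1), p w := by
      rw [Finset.sum_Ico_eq_sum_range]
      have hcount : m + 1 - (m - b) = b + 1 := by omega
      rw [hcount, ← Finset.sum_range_reflect]
      apply Finset.sum_congr rfl
      intro j hj
      simp only [mem_range] at hj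
      congr 1
      omega
    rw [hCf, hB, Finset.sum_Ico_eq_sub _ (by omega : m - b ≤ m + 1),
        Finset.sum_Ico_eq_sub _ (by omega : m - b ≤ a + 1), hsum]
    set A := ∑ u ∈ range (a+1), p u with hA'
    set s := ∑ u ∈ range (m - b), p u with hs'
    have hs0 : 0 ≤ s := Finset.sum_nonneg fun u _ => hp u
    have hA1 : A ≤ 1 := by
      rw [← hsum]
      exact Finset.sum_le_sum_of_subset_of_nonneg
        (Finset.range_subset_range.2 (by omega)) (fun i _ _ => hp i)
    nlinarith
  · -- correction term vanishes
    have hCf : ∑ u ∈ range (a+1), (if m - u ∈ range (b+1) then p u else 0) = 0 := by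
      apply Finset.sum_eq_zero
      intro u hu
      simp only [mem_range] at hu ⊢
      rw [if_neg (by omega)]
    rw [hCf]
    have := mul_nonneg hA0 hB0
    linarith
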